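/- For any real biquadratic tensor A ∈ ℝ^{m×n×m×n} with m, n ≥ 2, there exist unit vectors x ∈ ℝ^m, y ∈ ℝ^n and a real number λ satisfying the M-eigenvalue equations; i.e., every biquadratic tensor has at least one M-eigenvalue. -/

import Mathlib

noncomputable section
open Finset Metric

/-- The biquadratic form of a biquadratic tensor. -/
def bqForm {m n : ℕ} (A : Fin m → Fin n → Fin m → Fin n → ℝ)
    (x : Fin m → ℝ) (y : Fin n → ℝ) : ℝ :=
  ∑ i1, ∑ j1, ∑ i2, ∑ j2, A i1 j1 i2 j2 * x i1 * y j1 * x i2 * y j2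

/-- (λ, x, y) is an M-eigenpair of the biquadratic tensor A. -/
def IsMEigenpair {m n : ℕ} (A : Fin m → Fin n → Fin m → Fin n → ℝ)
    (lam : ℝ) (x : Fin m → ℝ) (y : Fin n → ℝ) : Prop :=
  (∑ i, x i ^ 2 = 1) ∧ (∑ j, y j ^ 2 = 1) ∧
  (∀ i, (∑ i1, ∑ j1, ∑ j2, A i1 j1 i j2 * x i1 * y j1 * y j2)
      + (∑ i2, ∑ j1, ∑ j2, A i j1 i2 j2 * y j1 * x i2 * y j2) = 2 * lam * x i) ∧
  (∀ j, (∑ i1, ∑ i2, ∑ j1, A i1 j1 i2 j * x i1 * y j1 * x i2)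
      + (∑ i1, ∑ i2, ∑ j2, A i1 j i2 j2 * x i1 * x i2 * y j2) = 2 * lam * y j)

/-- λ is an M-eigenvalue of A. -/
def IsMEigenvalue {m n : ℕ} (A : Fin m → Fin n → Fin m → Fin n → ℝ) (lam : ℝ) : Prop :=
  ∃ x y, IsMEigenpair A lam x y

/-- A is a positive semi-definite biquadratic tensor. -/
def BQPosSemidef {m n : ℕ} (A : Fin m → Fin n → Fin m → Fin n → ℝ) : Prop :=
  ∀ x y, 0 ≤ bqForm A x y

/-- A is a positive definite biquadratic tensor. -/
def BQPosDef {m n : ℕ} (A : Fin m → Fin n → Fin m → Fin n → ℝ) : Prop :=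
  ∀ x y, (∑ i, x i ^ 2 = 1) → (∑ j, y j ^ 2 = 1) → 0 < bqForm A x y

lemma euclid_min_eigen {k : ℕ} (B : Fin k → Fin k → ℝ) (hB : ∀ i j, B i j = B j i)
    (x₀ : EuclideanSpace ℝ (Fin k)) (hx : ‖x₀‖ = 1)
    (hmin : ∀ x : EuclideanSpace ℝ (Fin k), ‖x‖ = 1 →
      (∑ i, ∑ j, B i j * x₀ i * x₀ j) ≤ ∑ i, ∑ j, B i j * x i * x j) :
    ∀ i, (∑ j, B i j * x₀ j) = (∑ i, ∑ j, B i j * x₀ i * x₀ j) * x₀ i := by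
  set T : EuclideanSpace ℝ (Fin k) →L[ℝ] EuclideanSpace ℝ (Fin k) :=
    LinearMap.toContinuousLinearMap (Matrix.toEuclideanLin (Matrix.of B)) with hT
  have hT_apply : ∀ (x : EuclideanSpace ℝ (Fin k)) (i : Fin k), T x i = ∑ j, B i j * x j := by
    intro x i
    simp [hT, Matrix.toEuclideanLin_apply, Matrix.mulVec, dotProduct]
  have hre : ∀ x : EuclideanSpace ℝ (Fin k),
      T.reApplyInnerSelf x = ∑ i, ∑ j, B i j * x i * x j := by
    intro x
    rw [ContinuousLinearMap.reApplyInnerSelf_apply]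
    simp only [RCLike.re_to_real]
    rw [PiLp.inner_apply]
    simp only [RCLike.inner_apply, conj_trivial, hT_apply]
    rw [Finset.sum_congr rfl (fun i _ => Finset.mul_sum _ _ _)]
    exact Finset.sum_congr rfl fun i _ => Finset.sum_congr rfl fun j _ => by ring
  have hsa : IsSelfAdjoint T := by
    rw [ContinuousLinearMap.isSelfAdjoint_iff_isSymmetric]
    intro x y
    rw [PiLp.inner_apply, PiLp.inner_apply]
    simp only [RCLike.inner_apply, conj_trivial, ContinuousLinearMap.coe_coe, hT_apply]
    rw [Finset.sum_congr rfl (fun i (_ : i ∈ Finset.univ) => Finset.mul_sum _ _ (y i)),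
      Finset.sum_comm]
    refine Finset.sum_congr rfl fun a _ => ?_
    rw [Finset.sum_mul]
    exact Finset.sum_congr rfl fun b _ => by rw [hB b a]; ring
  have hminOn : IsMinOn T.reApplyInnerSelf (sphere (0 : EuclideanSpace ℝ (Fin k)) 1) x₀ := by
    refine isMinOn_iff.mpr fun z hz => ?_
    have hz1 : ‖z‖ = 1 := by simpa using mem_sphere_zero_iff_norm.mp hz
    rw [hre, hre]
    exact hmin z hz1
  have hextr : IsLocalExtrOn T.reApplyInnerSelf
      (sphere (0 : EuclideanSpace ℝ (Fin k)) ‖x₀‖) x₀ := by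
    rw [hx]
    exact (hminOn.localize).isExtr
  have heig := hsa.eq_smul_self_of_isLocalExtrOn_real hextr
  intro i
  have h2 : T x₀ i = (ContinuousLinearMap.rayleighQuotient T x₀ • x₀) i := by rw [heig]
  rw [hT_apply] at h2
  rw [h2]
  simp [ContinuousLinearMap.rayleighQuotient, hre, hx]

/-- Every biquadratic tensor has at least one M-eigenvalue. -/
theorem biquadratic_has_M_eigenvalue {m n : ℕ} (hm : 2 ≤ m) (hn : 2 ≤ n)
    (A : Fin m → Fin n → Fin m → Fin n → ℝ) :
    ∃ (lam : ℝ) (x : Fin m → ℝ) (y : Fin n → ℝ), IsMEigenpair A lam x y := by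
  classical
  -- continuity of the biquadratic form
  have hcont : Continuous
      (fun p : EuclideanSpace ℝ (Fin m) × EuclideanSpace ℝ (Fin n) =>
        bqForm A (fun i => p.1 i) (fun j => p.2 j)) := by
    unfold bqForm
    refine continuous_finset_sum _ fun i1 _ => continuous_finset_sum _ fun j1 _ =>
      continuous_finset_sum _ fun i2 _ => continuous_finset_sum _ fun j2 _ => ?_
    have h1 : Continuous fun p : EuclideanSpace ℝ (Fin m) × EuclideanSpace ℝ (Fin n) => p.1 i1 :=
      (EuclideanSpace.proj i1).continuous.comp continuous_fst
    have h2 : Continuous fun p : EuclideanSpace ℝ (Fin m) × EuclideanSpace ℝ (Fin n) => p.2 j1 :=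
      (EuclideanSpace.proj j1).continuous.comp continuous_snd
    have h3 : Continuous fun p : EuclideanSpace ℝ (Fin m) × EuclideanSpace ℝ (Fin n) => p.1 i2 :=
      (EuclideanSpace.proj i2).continuous.comp continuous_fst
    have h4 : Continuous fun p : EuclideanSpace ℝ (Fin m) × EuclideanSpace ℝ (Fin n) => p.2 j2 :=
      (EuclideanSpace.proj j2).continuous.comp continuous_snd
    exact (((continuous_const.mul h1).mul h2).mul h3).mul h4
  -- compact nonempty domain
  have hcomp : IsCompact ((sphere (0 : EuclideanSpace ℝ (Fin m)) 1) ×ˢ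
      (sphere (0 : EuclideanSpace ℝ (Fin n)) 1)) :=
    (isCompact_sphere _ _).prod (isCompact_sphere _ _)
  have hne : ((sphere (0 : EuclideanSpace ℝ (Fin m)) 1) ×ˢ
      (sphere (0 : EuclideanSpace ℝ (Fin n)) 1)).Nonempty := by
    refine ⟨(EuclideanSpace.single ⟨0, by omega⟩ (1:ℝ),
      EuclideanSpace.single ⟨0, by omega⟩ (1:ℝ)), Set.mem_prod.mpr ⟨?_, ?_⟩⟩ <;>
      simp [mem_sphere_zero_iff_norm, EuclideanSpace.norm_single]
  obtain ⟨p, hpS, hpmin⟩ := hcomp.exists_isMinOn hne hcont.continuousOn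
  have hpmin' := isMinOn_iff.mp hpmin
  obtain ⟨hp1, hp2⟩ := Set.mem_prod.mp hpS
  have hx : ‖p.1‖ = 1 := by simpa using mem_sphere_zero_iff_norm.mp hp1
  have hy : ‖p.2‖ = 1 := by simpa using mem_sphere_zero_iff_norm.mp hp2
  -- the two symmetrized matrices
  set B : Fin m → Fin m → ℝ := fun i1 i2 =>
    ∑ j1, ∑ j2, (A i1 j1 i2 j2 + A i2 j1 i1 j2) / 2 * p.2 j1 * p.2 j2 with hBdef
  set C : Fin n → Fin n → ℝ := fun j1 j2 =>
    ∑ i1, ∑ i2, (A i1 j1 i2 j2 + A i1 j2 i2 j1) / 2 * p.1 i1 * p.1 i2 with hCdef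
  have hBsymm : ∀ i j, B i j = B j i := by
    intro i j
    refine Finset.sum_congr rfl fun j1 _ => Finset.sum_congr rfl fun j2 _ => by ring
  have hCsymm : ∀ i j, C i j = C j i := by
    intro i j
    refine Finset.sum_congr rfl fun i1 _ => Finset.sum_congr rfl fun i2 _ => by ring
  -- quadratic form identities
  have K1 : ∀ x : EuclideanSpace ℝ (Fin m),
      (∑ i1, ∑ i2, B i1 i2 * x i1 * x i2) = bqForm A (fun i => x i) (fun j => p.2 j) := by
    intro x
    calc ∑ i1, ∑ i2, B i1 i2 * x i1 * x i2
        = ∑ i1, ∑ i2, ∑ j1, ∑ j2,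
            (A i1 j1 i2 j2 * x i1 * p.2 j1 * x i2 * p.2 j2 / 2
              + A i2 j1 i1 j2 * x i1 * p.2 j1 * x i2 * p.2 j2 / 2) := by
          simp only [hBdef, Finset.sum_mul]
          exact Finset.sum_congr rfl fun i1 _ => Finset.sum_congr rfl fun i2 _ =>
            Finset.sum_congr rfl fun j1 _ => Finset.sum_congr rfl fun j2 _ => by ring
      _ = (∑ i1, ∑ i2, ∑ j1, ∑ j2, A i1 j1 i2 j2 * x i1 * p.2 j1 * x i2 * p.2 j2 / 2)
          + (∑ i1, ∑ i2, ∑ j1, ∑ j2, A i2 j1 i1 j2 * x i1 * p.2 j1 * x i2 * p.2 j2 / 2) := by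
          simp only [Finset.sum_add_distrib]
      _ = (∑ i1, ∑ i2, ∑ j1, ∑ j2, A i1 j1 i2 j2 * x i1 * p.2 j1 * x i2 * p.2 j2 / 2)
          + (∑ i1, ∑ i2, ∑ j1, ∑ j2, A i1 j1 i2 j2 * x i1 * p.2 j1 * x i2 * p.2 j2 / 2) := by
          congr 1
          rw [Finset.sum_comm]
          exact Finset.sum_congr rfl fun a _ => Finset.sum_congr rfl fun b _ =>
            Finset.sum_congr rfl fun j1 _ => Finset.sum_congr rfl fun j2 _ => by ring
      _ = ∑ i1, ∑ i2, ∑ j1, ∑ j2, A i1 j1 i2 j2 * x i1 * p.2 j1 * x i2 * p.2 j2 := by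
          simp only [← Finset.sum_add_distrib]
          exact Finset.sum_congr rfl fun i1 _ => Finset.sum_congr rfl fun i2 _ =>
            Finset.sum_congr rfl fun j1 _ => Finset.sum_congr rfl fun j2 _ => by ring
      _ = bqForm A (fun i => x i) (fun j => p.2 j) := by
          unfold bqForm
          exact Finset.sum_congr rfl fun i1 _ => Finset.sum_comm
  have K2 : ∀ y : EuclideanSpace ℝ (Fin n),
      (∑ j1, ∑ j2, C j1 j2 * y j1 * y j2) = bqForm A (fun i => p.1 i) (fun j => y j) := by
    intro y
    calc ∑ j1, ∑ j2, C j1 j2 * y j1 * y j2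
        = ∑ j1, ∑ j2, ∑ i1, ∑ i2,
            (A i1 j1 i2 j2 * p.1 i1 * y j1 * p.1 i2 * y j2 / 2
              + A i1 j2 i2 j1 * p.1 i1 * y j1 * p.1 i2 * y j2 / 2) := by
          simp only [hCdef, Finset.sum_mul]
          exact Finset.sum_congr rfl fun j1 _ => Finset.sum_congr rfl fun j2 _ =>
            Finset.sum_congr rfl fun i1 _ => Finset.sum_congr rfl fun i2 _ => by ring
      _ = (∑ j1, ∑ j2, ∑ i1, ∑ i2, A i1 j1 i2 j2 * p.1 i1 * y j1 * p.1 i2 * y j2 / 2)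
          + (∑ j1, ∑ j2, ∑ i1, ∑ i2, A i1 j2 i2 j1 * p.1 i1 * y j1 * p.1 i2 * y j2 / 2) := by
          simp only [Finset.sum_add_distrib]
      _ = (∑ j1, ∑ j2, ∑ i1, ∑ i2, A i1 j1 i2 j2 * p.1 i1 * y j1 * p.1 i2 * y j2 / 2)
          + (∑ j1, ∑ j2, ∑ i1, ∑ i2, A i1 j1 i2 j2 * p.1 i1 * y j1 * p.1 i2 * y j2 / 2) := by
          congr 1
          rw [Finset.sum_comm]
          exact Finset.sum_congr rfl fun a _ => Finset.sum_congr rfl fun b _ =>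
            Finset.sum_congr rfl fun i1 _ => Finset.sum_congr rfl fun i2 _ => by ring
      _ = ∑ j1, ∑ j2, ∑ i1, ∑ i2, A i1 j1 i2 j2 * p.1 i1 * y j1 * p.1 i2 * y j2 := by
          simp only [← Finset.sum_add_distrib]
          exact Finset.sum_congr rfl fun j1 _ => Finset.sum_congr rfl fun j2 _ =>
            Finset.sum_congr rfl fun i1 _ => Finset.sum_congr rfl fun i2 _ => by ring
      _ = bqForm A (fun i => p.1 i) (fun j => y j) := by
          unfold bqForm
          calc ∑ j1, ∑ j2, ∑ i1, ∑ i2, A i1 j1 i2 j2 * p.1 i1 * y j1 * p.1 i2 * y j2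
              = ∑ j1, ∑ i1, ∑ j2, ∑ i2, A i1 j1 i2 j2 * p.1 i1 * y j1 * p.1 i2 * y j2 :=
                Finset.sum_congr rfl fun j1 _ => Finset.sum_comm
            _ = ∑ i1, ∑ j1, ∑ j2, ∑ i2, A i1 j1 i2 j2 * p.1 i1 * y j1 * p.1 i2 * y j2 :=
                Finset.sum_comm
            _ = ∑ i1, ∑ j1, ∑ i2, ∑ j2, A i1 j1 i2 j2 * p.1 i1 * y j1 * p.1 i2 * y j2 :=
                Finset.sum_congr rfl fun i1 _ => Finset.sum_congr rfl fun j1 _ =>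
                  Finset.sum_comm
  -- minimality transferred to each factor
  have hminB : ∀ x : EuclideanSpace ℝ (Fin m), ‖x‖ = 1 →
      (∑ i, ∑ j, B i j * p.1 i * p.1 j) ≤ ∑ i, ∑ j, B i j * x i * x j := by
    intro x hx1
    rw [K1, K1]
    exact hpmin' (x, p.2) (Set.mem_prod.mpr ⟨by simpa [mem_sphere_zero_iff_norm] using hx1, hp2⟩)
  have hminC : ∀ y : EuclideanSpace ℝ (Fin n), ‖y‖ = 1 →
      (∑ i, ∑ j, C i j * p.2 i * p.2 j) ≤ ∑ i, ∑ j, C i j * y i * y j := by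
    intro y hy1
    rw [K2, K2]
    exact hpmin' (p.1, y) (Set.mem_prod.mpr ⟨hp1, by simpa [mem_sphere_zero_iff_norm] using hy1⟩)
  have heigB := euclid_min_eigen B hBsymm p.1 hx hminB
  have heigC := euclid_min_eigen C hCsymm p.2 hy hminC
  set lam : ℝ := bqForm A (fun i => p.1 i) (fun j => p.2 j) with hlam
  have heigB' : ∀ i, (∑ j, B i j * p.1 j) = lam * p.1 i := by
    intro i; rw [heigB i, K1]
  have heigC' : ∀ j, (∑ j2, C j j2 * p.2 j2) = lam * p.2 j := by
    intro j; rw [heigC j, K2]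
  refine ⟨lam, (fun i => p.1 i), (fun j => p.2 j), ?_, ?_, ?_, ?_⟩
  · have h := hx
    rw [EuclideanSpace.norm_eq, Real.sqrt_eq_one] at h
    simpa [Real.norm_eq_abs, sq_abs] using h
  · have h := hy
    rw [EuclideanSpace.norm_eq, Real.sqrt_eq_one] at h
    simpa [Real.norm_eq_abs, sq_abs] using h
  · intro i
    have h := heigB' i
    have hR : 2 * lam * p.1 i = 2 * (∑ i2, B i i2 * p.1 i2) := by
      rw [mul_assoc, ← h]
    rw [hR, Finset.mul_sum]
    have hexp : ∀ i2 : Fin m, 2 * (B i i2 * p.1 i2)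
        = (∑ j1, ∑ j2, A i2 j1 i j2 * p.1 i2 * p.2 j1 * p.2 j2)
          + (∑ j1, ∑ j2, A i j1 i2 j2 * p.2 j1 * p.1 i2 * p.2 j2) := by
      intro i2
      simp only [hBdef, Finset.sum_mul, Finset.mul_sum, ← Finset.sum_add_distrib]
      exact Finset.sum_congr rfl fun j1 _ => Finset.sum_congr rfl fun j2 _ => by ring
    rw [Finset.sum_congr rfl fun i2 _ => hexp i2, Finset.sum_add_distrib]
  · intro j
    have h := heigC' j
    have hR : 2 * lam * p.2 j = 2 * (∑ j2, C j j2 * p.2 j2) := by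
      rw [mul_assoc, ← h]
    rw [hR, Finset.mul_sum]
    have hexp : ∀ j2 : Fin n, 2 * (C j j2 * p.2 j2)
        = (∑ i1, ∑ i2, A i1 j2 i2 j * p.1 i1 * p.2 j2 * p.1 i2)
          + (∑ i1, ∑ i2, A i1 j i2 j2 * p.1 i1 * p.1 i2 * p.2 j2) := by
      intro j2
      simp only [hCdef, Finset.sum_mul, Finset.mul_sum, ← Finset.sum_add_distrib]
      exact Finset.sum_congr rfl fun i1 _ => Finset.sum_congr rfl fun i2 _ => by ring
    rw [Finset.sum_congr rfl fun j2 _ => hexp j2, Finset.sum_add_distrib]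
    congr 1
    · calc ∑ i1, ∑ i2, ∑ j1, A i1 j1 i2 j * p.1 i1 * p.2 j1 * p.1 i2
          = ∑ i1, ∑ j1, ∑ i2, A i1 j1 i2 j * p.1 i1 * p.2 j1 * p.1 i2 :=
            Finset.sum_congr rfl fun i1 _ => Finset.sum_comm
        _ = ∑ j1, ∑ i1, ∑ i2, A i1 j1 i2 j * p.1 i1 * p.2 j1 * p.1 i2 :=
            Finset.sum_comm
        _ = ∑ j1, ∑ i1, ∑ i2, A i1 j1 i2 j * p.1 i1 * p.2 j1 * p.1 i2 := rfl
        _ = ∑ j2, ∑ i1, ∑ i2, A i1 j2 i2 j * p.1 i1 * p.2 j2 * p.1 i2 := rfl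
    · calc ∑ i1, ∑ i2, ∑ j2, A i1 j i2 j2 * p.1 i1 * p.1 i2 * p.2 j2
          = ∑ i1, ∑ j2, ∑ i2, A i1 j i2 j2 * p.1 i1 * p.1 i2 * p.2 j2 :=
            Finset.sum_congr rfl fun i1 _ => Finset.sum_comm
        _ = ∑ j2, ∑ i1, ∑ i2, A i1 j i2 j2 * p.1 i1 * p.1 i2 * p.2 j2 :=
            Finset.sum_comm
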